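/- For n ≥ 8, the visibility polynomial of the wheel graph W_n is V(W_n)(x) = (1+x)^{n-1} + x + (n-1)x^2 + 2(n-1)x^3. -/

import Mathlib

open SimpleGraph Polynomial

/-- Two vertices `u` and `v` are `X`-visible in `G` if some shortest `u`–`v` path
has no internal vertex in `X`, i.e. its support meets `X` only possibly in `{u, v}`. -/
def XVisible {V : Type*} (G : SimpleGraph V) (X : Set V) (u v : V) : Prop :=
  ∃ p : G.Walk u v, p.IsPath ∧ p.length = G.dist u v ∧
    ∀ w ∈ p.support, w ∈ X → w = u ∨ w = v

/-- `X` is a mutual-visibility set of `G` if every pair of vertices of `X` is `X`-visible. -/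
def MutualVisibilitySet {V : Type*} (G : SimpleGraph V) (X : Set V) : Prop :=
  ∀ u ∈ X, ∀ v ∈ X, XVisible G X u v

open Classical in
/-- The visibility polynomial: `∑ m_k x^k` where `m_k` is the number of
mutual-visibility sets of cardinality `k`. -/
noncomputable def visPoly {V : Type*} [Fintype V] (G : SimpleGraph V) : Polynomial ℕ :=
  ∑ S ∈ Finset.univ.powerset.filter (fun S : Finset V => MutualVisibilitySet G ↑S),
    Polynomial.X ^ S.card

/-- The wheel graph with rim `cycleGraph m` (on `some`-vertices) and hub `none`. -/
def wheelGraph (m : ℕ) : SimpleGraph (Option (Fin m)) :=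
  SimpleGraph.fromRel (fun u v =>
    (u = none ∧ v ≠ none) ∨
    ∃ i j : Fin m, u = some i ∧ v = some j ∧ (SimpleGraph.cycleGraph m).Adj i j)

/-- The shell graph with path `pathGraph m` (on `some`-vertices) and apex `none`. -/
def shellGraph (m : ℕ) : SimpleGraph (Option (Fin m)) :=
  SimpleGraph.fromRel (fun u v =>
    (u = none ∧ v ≠ none) ∨
    ∃ i j : Fin m, u = some i ∧ v = some j ∧ (SimpleGraph.pathGraph m).Adj i j)

/-- The bow graph: apex `none` joined to two disjoint paths of `a` and `b` vertices. -/
def bowGraph (a b : ℕ) : SimpleGraph (Option (Fin a ⊕ Fin b)) :=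
  SimpleGraph.fromRel (fun u v =>
    (u = none ∧ v ≠ none) ∨
    (∃ i j : Fin a, u = some (Sum.inl i) ∧ v = some (Sum.inl j) ∧ (SimpleGraph.pathGraph a).Adj i j) ∨
    (∃ i j : Fin b, u = some (Sum.inr i) ∧ v = some (Sum.inr j) ∧ (SimpleGraph.pathGraph b).Adj i j))

/-- The friendship graph: center `none`; the `i`-th triangle has the two
noncentral vertices `some (i, 0)` and `some (i, 1)`. -/
def friendshipGraph (n : ℕ) : SimpleGraph (Option (Fin n × Fin 2)) :=
  SimpleGraph.fromRel (fun u v =>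
    (u = none ∧ v ≠ none) ∨
    ∃ (i : Fin n) (x y : Fin 2), u = some (i, x) ∧ v = some (i, y) ∧ x ≠ y)

/-- The helm graph: a copy of the wheel (the `Sum.inl`-vertices) together with a
pendant vertex `Sum.inr k` attached to each rim vertex `Sum.inl (some k)`. -/
def helmGraph (m : ℕ) : SimpleGraph (Option (Fin m) ⊕ Fin m) :=
  SimpleGraph.fromRel (fun u v =>
    (∃ x y : Option (Fin m), u = Sum.inl x ∧ v = Sum.inl y ∧ (wheelGraph m).Adj x y) ∨
    (∃ k : Fin m, u = Sum.inl (some k) ∧ v = Sum.inr k))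

/-- `W` is a `c_Q`-visible set: `W ⊆ V \ Q`, every pair of vertices of `W` is
`Q`-visible, and `{u, w}` is `Q`-visible for all `u ∈ Q`, `w ∈ W`. -/
def CQVisible {V : Type*} (G : SimpleGraph V) (Q W : Set V) : Prop :=
  W ⊆ Qᶜ ∧ (∀ u ∈ W, ∀ v ∈ W, XVisible G Q u v) ∧ (∀ u ∈ Q, ∀ w ∈ W, XVisible G Q u w)

/-- An absolute `c_Q`-visible set: a `c_Q`-visible set for which `Q` is moreover a
mutual-visibility set of `G`. -/
def AbsoluteCQVisible {V : Type*} (G : SimpleGraph V) (Q W : Set V) : Prop :=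
  CQVisible G Q W ∧ MutualVisibilitySet G Q

namespace VisWheel

variable {m : ℕ}

lemma nat_mod_two (x M : ℕ) (h : x < 2 * M) : x % M = if x < M then x else x - M := by
  split_ifs with h'
  · exact Nat.mod_eq_of_lt h'
  · have : x - M < M := by omega
    have : x % M = (x - M) % M := by
      conv_lhs => rw [show x = (x - M) + M by omega]
      simp [Nat.add_mod_right]
    rw [this, Nat.mod_eq_of_lt ‹x - M < M›]

lemma fin_sub_val (a b : Fin m) :
    (a - b).val = if b.val ≤ a.val then a.val - b.val else a.val + m - b.val := by
  have ha := a.isLt; have hb := b.isLt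
  rw [Fin.sub_def]
  show (m - b.val + a.val) % m = _
  rw [nat_mod_two _ _ (by omega)]
  split_ifs <;> omega

lemma fin_add_val (a b : Fin m) :
    (a + b).val = if a.val + b.val < m then a.val + b.val else a.val + b.val - m := by
  have ha := a.isLt; have hb := b.isLt
  rw [Fin.add_def]
  show (a.val + b.val) % m = _
  rw [nat_mod_two _ _ (by omega)]

/-- val-level characterization of cycle adjacency. -/
lemma cyc_adj (hm : 3 ≤ m) {i j : Fin m} :
    (SimpleGraph.cycleGraph m).Adj i j ↔
      (j.val = i.val + 1 ∨ j.val + m = i.val + 1 ∨ i.val = j.val + 1 ∨ i.val + m = j.val + 1) := by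
  have hi := i.isLt; have hj := j.isLt
  rw [SimpleGraph.cycleGraph_adj', fin_sub_val, fin_sub_val]
  split_ifs <;> (constructor <;> intro h <;> omega)

lemma wheel_adj_none_some (i : Fin m) : (wheelGraph m).Adj none (some i) := by
  rw [wheelGraph, SimpleGraph.fromRel_adj]
  exact ⟨by simp, Or.inl (Or.inl ⟨rfl, by simp⟩)⟩

lemma wheel_adj_some_none (i : Fin m) : (wheelGraph m).Adj (some i) none :=
  (wheel_adj_none_some i).symm

lemma wheel_adj_some_some {i j : Fin m} :
    (wheelGraph m).Adj (some i) (some j) ↔ (SimpleGraph.cycleGraph m).Adj i j := by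
  rw [wheelGraph, SimpleGraph.fromRel_adj]
  constructor
  · rintro ⟨hne, h | h⟩ <;>
    · rcases h with ⟨h, -⟩ | ⟨a, b, ha, hb, hadj⟩
      · simp at h
      · simp only [Option.some.injEq] at ha hb
        subst ha; subst hb
        first | exact hadj | exact hadj.symm
  · intro h
    exact ⟨by simpa using h.ne, Or.inl (Or.inr ⟨i, j, rfl, rfl, h⟩)⟩

lemma wheel_adj_val (hm : 3 ≤ m) {i j : Fin m} :
    (wheelGraph m).Adj (some i) (some j) ↔
      (j.val = i.val + 1 ∨ j.val + m = i.val + 1 ∨ i.val = j.val + 1 ∨ i.val + m = j.val + 1) := by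
  rw [wheel_adj_some_some, cyc_adj hm]

lemma dist_none_some (i : Fin m) : (wheelGraph m).dist none (some i) = 1 :=
  SimpleGraph.dist_eq_one_iff_adj.mpr (wheel_adj_none_some i)

/-- the 2-step walk through the hub -/
def hubWalk (i j : Fin m) : (wheelGraph m).Walk (some i) (some j) :=
  SimpleGraph.Walk.cons (wheel_adj_some_none i)
    (SimpleGraph.Walk.cons (wheel_adj_none_some j) SimpleGraph.Walk.nil)

lemma dist_some_some {i j : Fin m} (hne : i ≠ j)
    (hnadj : ¬ (wheelGraph m).Adj (some i) (some j)) :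
    (wheelGraph m).dist (some i) (some j) = 2 := by
  have h2 : (wheelGraph m).dist (some i) (some j) ≤ 2 := by
    have := SimpleGraph.dist_le (hubWalk i j)
    simpa [hubWalk] using this
  have h0 : (wheelGraph m).dist (some i) (some j) ≠ 0 := by
    intro h
    rcases SimpleGraph.dist_eq_zero_iff_eq_or_not_reachable.mp h with h' | h'
    · exact hne (by simpa using h')
    · exact h' ⟨hubWalk i j⟩
  have h1 : (wheelGraph m).dist (some i) (some j) ≠ 1 := fun h =>
    hnadj (SimpleGraph.dist_eq_one_iff_adj.mp h)
  omega

lemma xvis_refl (G : SimpleGraph (Option (Fin m))) (X : Set (Option (Fin m)))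
    (u : Option (Fin m)) : XVisible G X u u :=
  ⟨SimpleGraph.Walk.nil, by simp, by simp [SimpleGraph.dist_self], by simp⟩

lemma xvis_adj {G : SimpleGraph (Option (Fin m))} {X : Set (Option (Fin m))}
    {u v : Option (Fin m)} (h : G.Adj u v) : XVisible G X u v := by
  refine ⟨SimpleGraph.Walk.cons h SimpleGraph.Walk.nil, ?_, ?_, ?_⟩
  · simp [SimpleGraph.Walk.isPath_def, h.ne]
  · simp [SimpleGraph.dist_eq_one_iff_adj.mpr h]
  · intro w hw _
    simpa using hw

lemma xvis_symm {G : SimpleGraph (Option (Fin m))} {X : Set (Option (Fin m))}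
    {u v : Option (Fin m)} (h : XVisible G X u v) : XVisible G X v u := by
  obtain ⟨p, hp, hl, hs⟩ := h
  refine ⟨p.reverse, (SimpleGraph.Walk.isPath_reverse_iff p).mpr hp, ?_, ?_⟩
  · rw [SimpleGraph.Walk.length_reverse, hl, SimpleGraph.dist_comm]
  · intro w hw hwX
    rw [SimpleGraph.Walk.support_reverse, List.mem_reverse] at hw
    exact (hs w hw hwX).symm

lemma xvis_two {X : Set (Option (Fin m))} {i j : Fin m} (w : Option (Fin m))
    (h1 : (wheelGraph m).Adj (some i) w) (h2 : (wheelGraph m).Adj w (some j))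
    (hne : i ≠ j) (hnadj : ¬ (wheelGraph m).Adj (some i) (some j))
    (hw : w ∉ X) : XVisible (wheelGraph m) X (some i) (some j) := by
  refine ⟨SimpleGraph.Walk.cons h1 (SimpleGraph.Walk.cons h2 SimpleGraph.Walk.nil), ?_, ?_, ?_⟩
  · simp [SimpleGraph.Walk.isPath_def, h1.ne, h2.ne, hne]
  · simp [dist_some_some hne hnadj]
  · intro z hz hzX
    simp only [SimpleGraph.Walk.support_cons, SimpleGraph.Walk.support_nil,
      List.mem_cons, List.mem_singleton] at hz
    rcases hz with rfl | rfl | rfl | h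
    · exact Or.inl rfl
    · exact absurd hzX hw
    · exact Or.inr rfl
    · simp at h


lemma exists_mid {V : Type*} {G : SimpleGraph V} {u v : V} (p : G.Walk u v)
    (hlen : p.length = 2) : ∃ w, G.Adj u w ∧ G.Adj w v ∧ w ∈ p.support := by
  cases p with
  | nil => simp at hlen
  | cons h q =>
    cases q with
    | nil => simp at hlen
    | cons h' q' =>
      have hq' : q'.length = 0 := by
        simp only [SimpleGraph.Walk.length_cons] at hlen; omega
      have hv := SimpleGraph.Walk.eq_of_length_eq_zero hq'
      subst hv
      exact ⟨_, h, h', by simp⟩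

lemma pair_cond {X : Set (Option (Fin m))} (hnone : none ∈ X) {i j : Fin m}
    (hij : i ≠ j) (hvis : XVisible (wheelGraph m) X (some i) (some j)) :
    (wheelGraph m).Adj (some i) (some j) ∨
      ∃ k : Fin m, (wheelGraph m).Adj (some i) (some k) ∧
        (wheelGraph m).Adj (some k) (some j) ∧ some k ∉ X := by
  by_cases hadj : (wheelGraph m).Adj (some i) (some j)
  · exact Or.inl hadj
  right
  have hdist := dist_some_some hij hadj
  obtain ⟨p, hp, hl, hs⟩ := hvis
  rw [hdist] at hl
  obtain ⟨w, h1, h2, hw⟩ := exists_mid p hl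
  have hwX : w ∉ X := by
    intro hmem
    rcases hs w hw hmem with rfl | rfl
    · exact h1.ne rfl
    · exact h2.ne rfl
  obtain ⟨k, rfl⟩ : ∃ k, w = some k := by
    cases w with
    | none => exact absurd hnone hwX
    | some k => exact ⟨k, rfl⟩
  exact ⟨k, h1, h2, hwX⟩

lemma not_three (hm : 7 ≤ m) {X : Set (Option (Fin m))}
    (hX : MutualVisibilitySet (wheelGraph m) X) (hnone : none ∈ X) {a b c : Fin m}
    (ha : some a ∈ X) (hb : some b ∈ X) (hc : some c ∈ X)
    (hab : a ≠ b) (hac : a ≠ c) (hbc : b ≠ c) : False := by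
  have hm3 : 3 ≤ m := by omega
  -- translate a pair condition into val-level facts
  have key : ∀ x y : Fin m, some x ∈ X → some y ∈ X → x ≠ y →
      ((y.val = x.val + 1 ∨ y.val + m = x.val + 1 ∨ x.val = y.val + 1 ∨ x.val + m = y.val + 1) ∨
        ∃ k : Fin m, k.val < m ∧
          (k.val = x.val + 1 ∨ k.val + m = x.val + 1 ∨ x.val = k.val + 1 ∨ x.val + m = k.val + 1) ∧
          (y.val = k.val + 1 ∨ y.val + m = k.val + 1 ∨ k.val = y.val + 1 ∨ k.val + m = y.val + 1) ∧
          k.val ≠ a.val ∧ k.val ≠ b.val ∧ k.val ≠ c.val) := by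
    intro x y hx hy hxy
    rcases pair_cond hnone hxy (hX _ hx _ hy) with h | ⟨k, h1, h2, hk⟩
    · exact Or.inl ((wheel_adj_val hm3).mp h)
    · refine Or.inr ⟨k, k.isLt, (wheel_adj_val hm3).mp h1, (wheel_adj_val hm3).mp h2,
        ?_, ?_, ?_⟩
      · exact fun h => hk (by rw [show k = a from Fin.ext h]; exact ha)
      · exact fun h => hk (by rw [show k = b from Fin.ext h]; exact hb)
      · exact fun h => hk (by rw [show k = c from Fin.ext h]; exact hc)
  have Rab := key a b ha hb hab
  have Rac := key a c ha hc hac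
  have Rbc := key b c hb hc hbc
  have hab' : a.val ≠ b.val := fun h => hab (Fin.ext h)
  have hac' : a.val ≠ c.val := fun h => hac (Fin.ext h)
  have hbc' : b.val ≠ c.val := fun h => hbc (Fin.ext h)
  have hav := a.isLt; have hbv := b.isLt; have hcv := c.isLt
  rcases Rab with h1 | ⟨k1, hk1⟩ <;> rcases Rac with h2 | ⟨k2, hk2⟩ <;>
    rcases Rbc with h3 | ⟨k3, hk3⟩ <;> omega


lemma mv_no_hub {S : Finset (Option (Fin m))} (h : (none : Option (Fin m)) ∉ S) :
    MutualVisibilitySet (wheelGraph m) ↑S := by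
  intro u hu v hv
  obtain ⟨i, rfl⟩ : ∃ i, u = some i := by
    cases u with
    | none => exact absurd (Finset.mem_coe.mp hu) h
    | some i => exact ⟨i, rfl⟩
  obtain ⟨j, rfl⟩ : ∃ j, v = some j := by
    cases v with
    | none => exact absurd (Finset.mem_coe.mp hv) h
    | some j => exact ⟨j, rfl⟩
  by_cases hij : i = j
  · subst hij; exact xvis_refl _ _ _
  by_cases hadj : (wheelGraph m).Adj (some i) (some j)
  · exact xvis_adj hadj
  · exact xvis_two none (wheel_adj_some_none i) (wheel_adj_none_some j) hij hadj
      (fun hc => h (Finset.mem_coe.mp hc))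

lemma mv_hub_only : MutualVisibilitySet (wheelGraph m) ↑({none} : Finset (Option (Fin m))) := by
  intro u hu v hv
  simp only [Finset.coe_singleton, Set.mem_singleton_iff] at hu hv
  subst hu; subst hv; exact xvis_refl _ _ _

lemma mv_hub_one (i : Fin m) :
    MutualVisibilitySet (wheelGraph m) ↑({none, some i} : Finset (Option (Fin m))) := by
  intro u hu v hv
  simp only [Finset.coe_insert, Finset.coe_singleton, Set.mem_insert_iff,
    Set.mem_singleton_iff] at hu hv
  rcases hu with rfl | rfl <;> rcases hv with rfl | rfl
  · exact xvis_refl _ _ _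
  · exact xvis_adj (wheel_adj_none_some i)
  · exact xvis_adj (wheel_adj_some_none i)
  · exact xvis_refl _ _ _

lemma mv_hub_pair (hm : 7 ≤ m) {i j : Fin m}
    (hval : j.val = i.val + 1 ∨ j.val + m = i.val + 1 ∨ j.val = i.val + 2 ∨ j.val + m = i.val + 2) :
    MutualVisibilitySet (wheelGraph m) ↑({none, some i, some j} : Finset (Option (Fin m))) := by
  have hm3 : 3 ≤ m := by omega
  have hiv := i.isLt; have hjv := j.isLt
  have hijv : i.val ≠ j.val := by omega
  have hij : i ≠ j := fun h => hijv (by rw [h])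
  have main : XVisible (wheelGraph m) ↑({none, some i, some j} : Finset (Option (Fin m)))
      (some i) (some j) := by
    by_cases hadj : (wheelGraph m).Adj (some i) (some j)
    · exact xvis_adj hadj
    · have hnadj := (wheel_adj_val hm3).not.mp hadj
      push_neg at hnadj
      -- midpoint
      set k : Fin m := i + ⟨1, by omega⟩ with hk
      have hkv : k.val = if i.val + 1 < m then i.val + 1 else i.val + 1 - m := by
        rw [hk, fin_add_val]
      have hkv' : k.val = i.val + 1 ∨ k.val + m = i.val + 1 ∨ i.val = k.val + 1 ∨
          i.val + m = k.val + 1 := by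
        split_ifs at hkv <;> omega
      refine xvis_two (some k) ((wheel_adj_val hm3).mpr hkv')
        ((wheel_adj_val hm3).mpr ?_) hij hadj ?_
      · split_ifs at hkv <;> omega
      · simp only [Finset.coe_insert, Finset.coe_singleton, Set.mem_insert_iff,
          Set.mem_singleton_iff]
        push_neg
        refine ⟨by simp, ?_, ?_⟩ <;>
          (intro h; rw [Option.some_inj] at h; apply_fun Fin.val at h;
            split_ifs at hkv <;> omega)
  intro u hu v hv
  simp only [Finset.coe_insert, Finset.coe_singleton, Set.mem_insert_iff,
    Set.mem_singleton_iff] at hu hv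
  rcases hu with rfl | rfl | rfl <;> rcases hv with rfl | rfl | rfl
  · exact xvis_refl _ _ _
  · exact xvis_adj (wheel_adj_none_some i)
  · exact xvis_adj (wheel_adj_none_some j)
  · exact xvis_adj (wheel_adj_some_none i)
  · exact xvis_refl _ _ _
  · exact main
  · exact xvis_adj (wheel_adj_some_none j)
  · exact xvis_symm main
  · exact xvis_refl _ _ _

lemma classify (hm : 7 ≤ m) {S : Finset (Option (Fin m))}
    (hS : MutualVisibilitySet (wheelGraph m) ↑S) (hnone : none ∈ S) :
    S = {none} ∨ (∃ i, S = {none, some i}) ∨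
      (∃ i j : Fin m, S = {none, some i, some j} ∧
        (j.val = i.val + 1 ∨ j.val + m = i.val + 1 ∨ j.val = i.val + 2 ∨ j.val + m = i.val + 2)) := by
  have hm3 : 3 ≤ m := by omega
  classical
  set R := S.erase none with hR
  have hcard : R.card ≤ 2 := by
    by_contra hlt
    obtain ⟨x, y, z, hx, hy, hz, hxy, hxz, hyz⟩ :=
      Finset.two_lt_card_iff.mp (show 2 < R.card by omega)
    obtain ⟨a, rfl⟩ : ∃ a, x = some a := by
      cases x with
      | none => exact absurd (Finset.mem_erase.mp hx).1 (by simp)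
      | some a => exact ⟨a, rfl⟩
    obtain ⟨b, rfl⟩ : ∃ b, y = some b := by
      cases y with
      | none => exact absurd (Finset.mem_erase.mp hy).1 (by simp)
      | some b => exact ⟨b, rfl⟩
    obtain ⟨c, rfl⟩ : ∃ c, z = some c := by
      cases z with
      | none => exact absurd (Finset.mem_erase.mp hz).1 (by simp)
      | some c => exact ⟨c, rfl⟩
    exact not_three hm hS (Finset.mem_coe.mpr hnone)
      (Finset.mem_coe.mpr (Finset.mem_of_mem_erase hx))
      (Finset.mem_coe.mpr (Finset.mem_of_mem_erase hy))
      (Finset.mem_coe.mpr (Finset.mem_of_mem_erase hz))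
      (fun h => hxy (by rw [h])) (fun h => hxz (by rw [h])) (fun h => hyz (by rw [h]))
  have hSR : S = insert none R := (Finset.insert_erase hnone).symm
  have hc012 : R.card = 0 ∨ R.card = 1 ∨ R.card = 2 := by omega
  rcases hc012 with hc | hc | hc
  · left
    rw [hSR, Finset.card_eq_zero.mp hc]
    rfl
  · right; left
    obtain ⟨x, hx⟩ := Finset.card_eq_one.mp hc
    obtain ⟨i, rfl⟩ : ∃ i, x = some i := by
      cases x with
      | none =>
        exfalso
        have : (none : Option (Fin m)) ∈ R := by rw [hx]; simp
        exact (Finset.mem_erase.mp this).1 rfl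
      | some i => exact ⟨i, rfl⟩
    exact ⟨i, by rw [hSR, hx]⟩
  · right; right
    obtain ⟨x, y, hxy, hx⟩ := Finset.card_eq_two.mp hc
    obtain ⟨i, rfl⟩ : ∃ i, x = some i := by
      cases x with
      | none =>
        exfalso
        have : (none : Option (Fin m)) ∈ R := by rw [hx]; simp
        exact (Finset.mem_erase.mp this).1 rfl
      | some i => exact ⟨i, rfl⟩
    obtain ⟨j, rfl⟩ : ∃ j, y = some j := by
      cases y with
      | none =>
        exfalso
        have : (none : Option (Fin m)) ∈ R := by rw [hx]; simp
        exact (Finset.mem_erase.mp this).1 rfl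
      | some j => exact ⟨j, rfl⟩
    have hij : i ≠ j := fun h => hxy (by rw [h])
    have hSet : S = {none, some i, some j} := by rw [hSR, hx]
    have hiS : some i ∈ S := by rw [hSet]; simp
    have hjS : some j ∈ S := by rw [hSet]; simp
    have hiv := i.isLt; have hjv := j.isLt
    have hijv : i.val ≠ j.val := fun h => hij (Fin.ext h)
    have hvd : j.val = i.val + 1 ∨ j.val + m = i.val + 1 ∨ i.val = j.val + 1 ∨
        i.val + m = j.val + 1 ∨ j.val = i.val + 2 ∨ j.val + m = i.val + 2 ∨
        i.val = j.val + 2 ∨ i.val + m = j.val + 2 := by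
      rcases pair_cond (Finset.mem_coe.mpr hnone) hij
          (hS _ (Finset.mem_coe.mpr hiS) _ (Finset.mem_coe.mpr hjS)) with h | ⟨k, h1, h2, -⟩
      · have := (wheel_adj_val hm3).mp h
        omega
      · have e1 := (wheel_adj_val hm3).mp h1
        have e2 := (wheel_adj_val hm3).mp h2
        have := k.isLt
        omega
    rcases hvd with h | h | h | h | h | h | h | h
    · exact ⟨i, j, hSet, by omega⟩
    · exact ⟨i, j, hSet, by omega⟩
    · exact ⟨j, i, by rw [hSet]; ext z; simp; tauto, by omega⟩
    · exact ⟨j, i, by rw [hSet]; ext z; simp; tauto, by omega⟩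
    · exact ⟨i, j, hSet, by omega⟩
    · exact ⟨i, j, hSet, by omega⟩
    · exact ⟨j, i, by rw [hSet]; ext z; simp; tauto, by omega⟩
    · exact ⟨j, i, by rw [hSet]; ext z; simp; tauto, by omega⟩


lemma sum_pow_card {α : Type*} [DecidableEq α] (s : Finset α) :
    ∑ t ∈ s.powerset, (Polynomial.X : Polynomial ℕ) ^ t.card =
      (1 + Polynomial.X) ^ s.card := by
  calc ∑ t ∈ s.powerset, (Polynomial.X : Polynomial ℕ) ^ t.card
      = ∑ j ∈ Finset.range (s.card + 1), ∑ t ∈ Finset.powersetCard j s,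
          (Polynomial.X : Polynomial ℕ) ^ t.card := Finset.sum_powerset s _
    _ = ∑ j ∈ Finset.range (s.card + 1),
          (s.card.choose j) • (Polynomial.X : Polynomial ℕ) ^ j := by
        refine Finset.sum_congr rfl fun j _ => ?_
        rw [Finset.sum_congr rfl (fun t ht =>
          by rw [(Finset.mem_powersetCard.mp ht).2]),
          Finset.sum_const, Finset.card_powersetCard]
    _ = (1 + Polynomial.X) ^ s.card := by
        rw [add_comm (1 : Polynomial ℕ) Polynomial.X, add_pow]
        refine Finset.sum_congr rfl fun j _ => ?_
        simp only [one_pow, mul_one, nsmul_eq_mul]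
        ring

end VisWheel

open VisWheel Finset in
theorem visPoly_wheel (n : ℕ) (hn : 8 ≤ n) :
    visPoly (wheelGraph (n - 1)) =
      (1 + Polynomial.X) ^ (n - 1) + Polynomial.X +
        Polynomial.C (n - 1) * Polynomial.X ^ 2 +
        Polynomial.C (2 * (n - 1)) * Polynomial.X ^ 3 := by
  classical
  set m := n - 1 with hmdef
  have hm : 7 ≤ m := by omega
  have h1m : 1 < m := by omega
  have h2m : 2 < m := by omega
  set o1 : Fin m := ⟨1, h1m⟩ with ho1
  set o2 : Fin m := ⟨2, h2m⟩ with ho2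
  have ho1v : o1.val = 1 := rfl
  have ho2v : o2.val = 2 := rfl
  set f2 : Fin m → Finset (Option (Fin m)) := fun i => {none, some i} with hf2
  set f3 : Fin m → Finset (Option (Fin m)) := fun i => {none, some i, some (i + o1)} with hf3
  set f4 : Fin m → Finset (Option (Fin m)) := fun i => {none, some i, some (i + o2)} with hf4
  set T0 : Finset (Finset (Option (Fin m))) :=
    ((Finset.univ : Finset (Option (Fin m))).erase none).powerset with hT0
  set T1 : Finset (Finset (Option (Fin m))) :=
    insert {none} (Finset.image f2 Finset.univ ∪ Finset.image f3 Finset.univ ∪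
      Finset.image f4 Finset.univ) with hT1
  -- every member of T1 contains `none`
  have hT1none : ∀ S ∈ T1, (none : Option (Fin m)) ∈ S := by
    intro S hS
    rcases Finset.mem_insert.mp hS with rfl | hS
    · simp
    rcases Finset.mem_union.mp hS with hS | hS
    · rcases Finset.mem_union.mp hS with hS | hS <;>
        obtain ⟨i, -, rfl⟩ := Finset.mem_image.mp hS <;> simp [hf2, hf3]
    · obtain ⟨i, -, rfl⟩ := Finset.mem_image.mp hS; simp [hf4]
  have hTeq : (Finset.univ.powerset.filter
      (fun S : Finset (Option (Fin m)) => MutualVisibilitySet (wheelGraph m) ↑S)) = T0 ∪ T1 := by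
    ext S
    simp only [Finset.mem_filter, Finset.mem_powerset, Finset.subset_univ, true_and,
      Finset.mem_union]
    constructor
    · intro hMV
      by_cases hnS : (none : Option (Fin m)) ∈ S
      · right
        rcases classify hm hMV hnS with h | ⟨i, h⟩ | ⟨i, j, hSet, hval⟩
        · rw [h]; exact Finset.mem_insert_self _ _
        · exact Finset.mem_insert_of_mem (Finset.mem_union_left _ (Finset.mem_union_left _
            (Finset.mem_image.mpr ⟨i, Finset.mem_univ i, by rw [hf2, h]⟩)))
        · have hiv := i.isLt; have hjv := j.isLt
          refine Finset.mem_insert_of_mem ?_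
          have e1 := fin_add_val i o1
          have e2 := fin_add_val i o2
          rw [ho1v] at e1; rw [ho2v] at e2
          rcases hval with h | h | h | h
          · refine Finset.mem_union_left _ (Finset.mem_union_right _
              (Finset.mem_image.mpr ⟨i, Finset.mem_univ i, ?_⟩))
            rw [hf3]
            have : j = i + o1 := Fin.ext (by split_ifs at e1 <;> omega)
            rw [hSet, this]
          · refine Finset.mem_union_left _ (Finset.mem_union_right _
              (Finset.mem_image.mpr ⟨i, Finset.mem_univ i, ?_⟩))
            rw [hf3]
            have : j = i + o1 := Fin.ext (by split_ifs at e1 <;> omega)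
            rw [hSet, this]
          · refine Finset.mem_union_right _
              (Finset.mem_image.mpr ⟨i, Finset.mem_univ i, ?_⟩)
            rw [hf4]
            have : j = i + o2 := Fin.ext (by split_ifs at e2 <;> omega)
            rw [hSet, this]
          · refine Finset.mem_union_right _
              (Finset.mem_image.mpr ⟨i, Finset.mem_univ i, ?_⟩)
            rw [hf4]
            have : j = i + o2 := Fin.ext (by split_ifs at e2 <;> omega)
            rw [hSet, this]
      · left
        exact Finset.mem_powerset.mpr (fun x hx => Finset.mem_erase.mpr
          ⟨fun hc => hnS (hc ▸ hx), Finset.mem_univ x⟩)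
    · intro h
      rcases h with h | h
      · refine mv_no_hub (fun hc => ?_)
        exact (Finset.mem_erase.mp (Finset.mem_powerset.mp h hc)).1 rfl
      · rcases Finset.mem_insert.mp h with rfl | h'
        · exact mv_hub_only
        rcases Finset.mem_union.mp h' with h'' | h''
        · rcases Finset.mem_union.mp h'' with h3 | h3
          · obtain ⟨i, -, rfl⟩ := Finset.mem_image.mp h3
            exact mv_hub_one i
          · obtain ⟨i, -, rfl⟩ := Finset.mem_image.mp h3
            refine mv_hub_pair hm ?_
            have e1 := fin_add_val i o1
            rw [ho1v] at e1
            have hiv := i.isLt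
            split_ifs at e1 <;> omega
        · obtain ⟨i, -, rfl⟩ := Finset.mem_image.mp h''
          refine mv_hub_pair hm ?_
          have e2 := fin_add_val i o2
          rw [ho2v] at e2
          have hiv := i.isLt
          split_ifs at e2 <;> omega
  -- cardinalities
  have hcard2 : ∀ i : Fin m, (f2 i).card = 2 := by
    intro i; rw [hf2]; simp
  have hne31 : ∀ i : Fin m, i ≠ i + o1 := by
    intro i h
    apply_fun Fin.val at h
    have e1 := fin_add_val i o1
    rw [ho1v] at e1
    have hiv := i.isLt
    split_ifs at e1 <;> omega
  have hne42 : ∀ i : Fin m, i ≠ i + o2 := by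
    intro i h
    apply_fun Fin.val at h
    have e2 := fin_add_val i o2
    rw [ho2v] at e2
    have hiv := i.isLt
    split_ifs at e2 <;> omega
  have hcard3 : ∀ i : Fin m, (f3 i).card = 3 := by
    intro i; rw [hf3]
    rw [Finset.card_insert_of_notMem (by simp), Finset.card_insert_of_notMem (by
      simp only [Finset.mem_singleton, Option.some_inj]
      exact hne31 i)]
    simp
  have hcard4 : ∀ i : Fin m, (f4 i).card = 3 := by
    intro i; rw [hf4]
    rw [Finset.card_insert_of_notMem (by simp), Finset.card_insert_of_notMem (by
      simp only [Finset.mem_singleton, Option.some_inj]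
      exact hne42 i)]
    simp
  -- injectivity
  have hinj2 : ∀ x : Fin m, ∀ y : Fin m, f2 x = f2 y → x = y := by
    intro x y h
    have h1 : some x ∈ f2 y := by rw [← h, hf2]; simp
    rw [hf2] at h1
    simp only [Finset.mem_insert, Finset.mem_singleton, reduceCtorEq, false_or,
      Option.some_inj] at h1
    exact h1
  have hinj3 : ∀ x : Fin m, ∀ y : Fin m, f3 x = f3 y → x = y := by
    intro x y h
    have h1 : some x ∈ f3 y := by rw [← h, hf3]; simp
    have h2 : some (x + o1) ∈ f3 y := by rw [← h, hf3]; simp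
    rw [hf3] at h1 h2
    simp only [Finset.mem_insert, Finset.mem_singleton, reduceCtorEq, false_or,
      Option.some_inj, Fin.ext_iff] at h1 h2
    have e1 := fin_add_val x o1
    have e2 := fin_add_val y o1
    rw [ho1v] at e1 e2
    have hx := x.isLt; have hy := y.isLt
    apply Fin.ext
    split_ifs at e1 e2 <;> omega
  have hinj4 : ∀ x : Fin m, ∀ y : Fin m, f4 x = f4 y → x = y := by
    intro x y h
    have h1 : some x ∈ f4 y := by rw [← h, hf4]; simp
    have h2 : some (x + o2) ∈ f4 y := by rw [← h, hf4]; simp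
    rw [hf4] at h1 h2
    simp only [Finset.mem_insert, Finset.mem_singleton, reduceCtorEq, false_or,
      Option.some_inj, Fin.ext_iff] at h1 h2
    have e1 := fin_add_val x o2
    have e2 := fin_add_val y o2
    rw [ho2v] at e1 e2
    have hx := x.isLt; have hy := y.isLt
    apply Fin.ext
    split_ifs at e1 e2 <;> omega
  -- disjointness
  have hd01 : Disjoint T0 T1 := by
    rw [Finset.disjoint_left]
    intro S hS0 hS1
    exact (Finset.mem_erase.mp (Finset.mem_powerset.mp hS0 (hT1none S hS1))).1 rfl
  have hd34 : Disjoint (Finset.image f3 Finset.univ) (Finset.image f4 Finset.univ) := by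
    rw [Finset.disjoint_left]
    rintro S hS3 hS4
    obtain ⟨i, -, rfl⟩ := Finset.mem_image.mp hS3
    obtain ⟨j, -, hj⟩ := Finset.mem_image.mp hS4
    have h1 : some i ∈ f4 j := by rw [hj, hf3]; simp
    have h2 : some (i + o1) ∈ f4 j := by rw [hj, hf3]; simp
    rw [hf4] at h1 h2
    simp only [Finset.mem_insert, Finset.mem_singleton, reduceCtorEq, false_or,
      Option.some_inj, Fin.ext_iff] at h1 h2
    have e1 := fin_add_val i o1
    have e2 := fin_add_val j o2
    rw [ho1v] at e1; rw [ho2v] at e2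
    have hx := i.isLt; have hy := j.isLt
    split_ifs at e1 e2 <;> omega
  have hd234 : Disjoint (Finset.image f2 Finset.univ)
      (Finset.image f3 Finset.univ ∪ Finset.image f4 Finset.univ) := by
    rw [Finset.disjoint_left]
    rintro S hS2 hS34
    obtain ⟨i, -, rfl⟩ := Finset.mem_image.mp hS2
    rcases Finset.mem_union.mp hS34 with h | h <;> obtain ⟨j, -, hj⟩ := Finset.mem_image.mp h
    · have := congrArg Finset.card hj
      rw [hcard3 j, hcard2 i] at this
      omega
    · have := congrArg Finset.card hj
      rw [hcard4 j, hcard2 i] at this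
      omega
  have hnotmem : ({none} : Finset (Option (Fin m))) ∉
      (Finset.image f2 Finset.univ ∪ Finset.image f3 Finset.univ ∪
        Finset.image f4 Finset.univ) := by
    intro h
    have hc : ∀ S ∈ (Finset.image f2 Finset.univ ∪ Finset.image f3 Finset.univ ∪
        Finset.image f4 Finset.univ), 2 ≤ S.card := by
      intro S hS
      rcases Finset.mem_union.mp hS with hS | hS
      · rcases Finset.mem_union.mp hS with hS | hS <;>
          obtain ⟨i, -, rfl⟩ := Finset.mem_image.mp hS
        · rw [hcard2 i]
        · rw [hcard3 i]; omega
      · obtain ⟨i, -, rfl⟩ := Finset.mem_image.mp hS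
        rw [hcard4 i]; omega
    have := hc _ h
    simp at this
  -- the sum
  rw [visPoly]
  rw [hTeq, Finset.sum_union hd01]
  have hT0sum : ∑ S ∈ T0, (Polynomial.X : Polynomial ℕ) ^ S.card =
      (1 + Polynomial.X) ^ m := by
    rw [hT0, sum_pow_card]
    congr 1
    rw [Finset.card_erase_of_mem (Finset.mem_univ _), Finset.card_univ,
      Fintype.card_option, Fintype.card_fin]
    omega
  have hT1sum : ∑ S ∈ T1, (Polynomial.X : Polynomial ℕ) ^ S.card =
      Polynomial.X + (m : Polynomial ℕ) * Polynomial.X ^ 2 +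
        ((m : Polynomial ℕ) * Polynomial.X ^ 3 + (m : Polynomial ℕ) * Polynomial.X ^ 3) := by
    rw [hT1, Finset.sum_insert hnotmem, Finset.union_assoc, Finset.sum_union hd234, Finset.sum_union hd34,
      Finset.sum_image (fun x _ y _ h => hinj2 x y h),
      Finset.sum_image (fun x _ y _ h => hinj3 x y h),
      Finset.sum_image (fun x _ y _ h => hinj4 x y h)]
    simp only [hcard2, hcard3, hcard4, Finset.sum_const, Finset.card_univ, Fintype.card_fin,
      Finset.card_singleton, pow_one, nsmul_eq_mul]
    ring
  rw [hT0sum, hT1sum,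
    show (Polynomial.C m : Polynomial ℕ) = (m : Polynomial ℕ) from rfl,
    show (Polynomial.C (2 * m) : Polynomial ℕ) = ((2 * m : ℕ) : Polynomial ℕ) from rfl]
  push_cast
  ring
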